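/- For every real n > 2, the function h_n satisfies h_n(1) = 0, h_n′(1) = 0, h_n″(1) = 0, and h_n‴(1) < 0. -/

import Mathlib

/-- `h_n(b) = n(1−b)(1−b^(n−2)) + (n−2)(1 + b^(n−2) − 2b^(n−1))·ln b`. -/
noncomputable def pwH (n b : ℝ) : ℝ :=
  n * (1 - b) * (1 - b ^ (n - 2)) +
    (n - 2) * (1 + b ^ (n - 2) - 2 * b ^ (n - 1)) * Real.log b

noncomputable def pwH1 (n b : ℝ) : ℝ :=
  -(n * (1 - b ^ (n - 2))) - n * (n - 2) * (1 - b) * b ^ (n - 3)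
    + (n - 2) * ((n - 2) * b ^ (n - 3) - 2 * (n - 1) * b ^ (n - 2)) * Real.log b
    + (n - 2) * (1 + b ^ (n - 2) - 2 * b ^ (n - 1)) * b⁻¹

noncomputable def pwH2 (n b : ℝ) : ℝ :=
  2 * n * (n - 2) * b ^ (n - 3) - n * (n - 2) * (n - 3) * (1 - b) * b ^ (n - 4)
    + (n - 2) * ((n - 2) * (n - 3) * b ^ (n - 4) - 2 * (n - 1) * (n - 2) * b ^ (n - 3)) * Real.log b
    + 2 * (n - 2) * ((n - 2) * b ^ (n - 3) - 2 * (n - 1) * b ^ (n - 2)) * b⁻¹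
    - (n - 2) * (1 + b ^ (n - 2) - 2 * b ^ (n - 1)) * (b ^ 2)⁻¹

noncomputable def pwH3 (n b : ℝ) : ℝ :=
  2 * n * (n - 2) * (n - 3) * b ^ (n - 4)
    + n * (n - 2) * (n - 3) * b ^ (n - 4)
    - n * (n - 2) * (n - 3) * (n - 4) * (1 - b) * b ^ (n - 5)
    + (n - 2) * ((n - 2) * (n - 3) * (n - 4) * b ^ (n - 5)
        - 2 * (n - 1) * (n - 2) * (n - 3) * b ^ (n - 4)) * Real.log b
    + (n - 2) * ((n - 2) * (n - 3) * b ^ (n - 4) - 2 * (n - 1) * (n - 2) * b ^ (n - 3)) * b⁻¹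
    + 2 * (n - 2) * ((n - 2) * (n - 3) * b ^ (n - 4) - 2 * (n - 1) * (n - 2) * b ^ (n - 3)) * b⁻¹
    - 2 * (n - 2) * ((n - 2) * b ^ (n - 3) - 2 * (n - 1) * b ^ (n - 2)) * (b ^ 2)⁻¹
    - (n - 2) * ((n - 2) * b ^ (n - 3) - 2 * (n - 1) * b ^ (n - 2)) * (b ^ 2)⁻¹
    + (n - 2) * (1 + b ^ (n - 2) - 2 * b ^ (n - 1)) * (2 * b / (b ^ 2) ^ 2)

lemma pwH_d1 (n : ℝ) {b : ℝ} (hb : 0 < b) : HasDerivAt (pwH n) (pwH1 n b) b := by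
  have hb' : b ≠ 0 := hb.ne'
  have hp : HasDerivAt (fun x : ℝ => x ^ (n - 2)) ((n - 2) * b ^ (n - 2 - 1)) b :=
    Real.hasDerivAt_rpow_const (Or.inl hb')
  have hq : HasDerivAt (fun x : ℝ => x ^ (n - 1)) ((n - 1) * b ^ (n - 1 - 1)) b :=
    Real.hasDerivAt_rpow_const (Or.inl hb')
  have hl : HasDerivAt Real.log b⁻¹ b := Real.hasDerivAt_log hb'
  have A := ((hasDerivAt_const b n).mul ((hasDerivAt_const b (1 : ℝ)).sub (hasDerivAt_id' b))).mul
      ((hasDerivAt_const b (1 : ℝ)).sub hp)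
  have B := (((hasDerivAt_const b (n - 2)).mul (((hasDerivAt_const b (1 : ℝ)).add hp).sub
      ((hasDerivAt_const b (2 : ℝ)).mul hq)))).mul hl
  have H := A.add B
  refine H.congr_deriv ?_
  rw [show n - 2 - 1 = n - 3 by ring, show n - 1 - 1 = n - 2 by ring]
  simp only [pwH1, Pi.mul_apply, Pi.sub_apply, Pi.add_apply, Pi.neg_apply]; ring

lemma pwH_d2 (n : ℝ) {b : ℝ} (hb : 0 < b) : HasDerivAt (pwH1 n) (pwH2 n b) b := by
  have hb' : b ≠ 0 := hb.ne'
  have hp : HasDerivAt (fun x : ℝ => x ^ (n - 2)) ((n - 2) * b ^ (n - 2 - 1)) b :=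
    Real.hasDerivAt_rpow_const (Or.inl hb')
  have hq : HasDerivAt (fun x : ℝ => x ^ (n - 1)) ((n - 1) * b ^ (n - 1 - 1)) b :=
    Real.hasDerivAt_rpow_const (Or.inl hb')
  have hr : HasDerivAt (fun x : ℝ => x ^ (n - 3)) ((n - 3) * b ^ (n - 3 - 1)) b :=
    Real.hasDerivAt_rpow_const (Or.inl hb')
  have hl : HasDerivAt Real.log b⁻¹ b := Real.hasDerivAt_log hb'
  have hi : HasDerivAt (fun x : ℝ => x⁻¹) (-(b ^ 2)⁻¹) b := hasDerivAt_inv hb'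
  have A := ((hasDerivAt_const b n).mul ((hasDerivAt_const b (1 : ℝ)).sub hp)).neg
  have B := ((hasDerivAt_const b (n * (n - 2))).mul
      ((hasDerivAt_const b (1 : ℝ)).sub (hasDerivAt_id' b))).mul hr
  have C := ((hasDerivAt_const b (n - 2)).mul
      (((hasDerivAt_const b ((n - 2) : ℝ)).mul hr).sub
        ((hasDerivAt_const b (2 * (n - 1))).mul hp))).mul hl
  have D := ((hasDerivAt_const b (n - 2)).mul
      (((hasDerivAt_const b (1 : ℝ)).add hp).sub ((hasDerivAt_const b (2 : ℝ)).mul hq))).mul hi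
  have H := ((A.sub B).add C).add D
  refine H.congr_deriv ?_
  rw [show n - 2 - 1 = n - 3 by ring, show n - 1 - 1 = n - 2 by ring,
    show n - 3 - 1 = n - 4 by ring]
  simp only [pwH2, Pi.mul_apply, Pi.sub_apply, Pi.add_apply, Pi.neg_apply]; ring

lemma pwH_d3 (n : ℝ) {b : ℝ} (hb : 0 < b) : HasDerivAt (pwH2 n) (pwH3 n b) b := by
  have hb' : b ≠ 0 := hb.ne'
  have hp : HasDerivAt (fun x : ℝ => x ^ (n - 2)) ((n - 2) * b ^ (n - 2 - 1)) b :=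
    Real.hasDerivAt_rpow_const (Or.inl hb')
  have hq : HasDerivAt (fun x : ℝ => x ^ (n - 1)) ((n - 1) * b ^ (n - 1 - 1)) b :=
    Real.hasDerivAt_rpow_const (Or.inl hb')
  have hr : HasDerivAt (fun x : ℝ => x ^ (n - 3)) ((n - 3) * b ^ (n - 3 - 1)) b :=
    Real.hasDerivAt_rpow_const (Or.inl hb')
  have hs : HasDerivAt (fun x : ℝ => x ^ (n - 4)) ((n - 4) * b ^ (n - 4 - 1)) b :=
    Real.hasDerivAt_rpow_const (Or.inl hb')
  have hl : HasDerivAt Real.log b⁻¹ b := Real.hasDerivAt_log hb'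
  have hi : HasDerivAt (fun x : ℝ => x⁻¹) (-(b ^ 2)⁻¹) b := hasDerivAt_inv hb'
  have hb2 : (b : ℝ) ^ 2 ≠ 0 := pow_ne_zero 2 hb'
  have hi2 : HasDerivAt (fun x : ℝ => (x ^ 2)⁻¹) (-(2 * b ^ 1 : ℝ) / (b ^ 2) ^ 2) b := by
    refine ((hasDerivAt_pow 2 b).inv hb2).congr_deriv ?_
    simp
  have A := (hasDerivAt_const b (2 * n * (n - 2))).mul hr
  have B := ((hasDerivAt_const b (n * (n - 2) * (n - 3))).mul
      ((hasDerivAt_const b (1 : ℝ)).sub (hasDerivAt_id' b))).mul hs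
  have C := ((hasDerivAt_const b (n - 2)).mul
      (((hasDerivAt_const b ((n - 2) * (n - 3))).mul hs).sub
        ((hasDerivAt_const b (2 * (n - 1) * (n - 2))).mul hr))).mul hl
  have D := ((hasDerivAt_const b (2 * (n - 2))).mul
      (((hasDerivAt_const b ((n - 2) : ℝ)).mul hr).sub
        ((hasDerivAt_const b (2 * (n - 1))).mul hp))).mul hi
  have E := ((hasDerivAt_const b (n - 2)).mul
      (((hasDerivAt_const b (1 : ℝ)).add hp).sub
        ((hasDerivAt_const b (2 : ℝ)).mul hq))).mul hi2
  have H := (((A.sub B).add C).add D).sub E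
  refine H.congr_deriv ?_
  rw [show n - 2 - 1 = n - 3 by ring, show n - 1 - 1 = n - 2 by ring,
    show n - 3 - 1 = n - 4 by ring, show n - 4 - 1 = n - 5 by ring]
  simp only [pwH3, Pi.mul_apply, Pi.sub_apply, Pi.add_apply, Pi.neg_apply]; ring

/-- For every real `n > 2`: `h_n(1) = 0`, `h_n′(1) = 0`, `h_n″(1) = 0` and `h_n‴(1) < 0`. -/
theorem pairwise_h_derivs_at_one (n : ℝ) (hn : 2 < n) :
    pwH n 1 = 0 ∧ deriv (pwH n) 1 = 0 ∧ deriv (deriv (pwH n)) 1 = 0 ∧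
      deriv (deriv (deriv (pwH n))) 1 < 0 := by
  have E1 : ∀ b : ℝ, 0 < b → deriv (pwH n) =ᶠ[nhds b] pwH1 n := by
    intro b hb
    filter_upwards [Ioi_mem_nhds hb] with x hx
    exact (pwH_d1 n hx).deriv
  have E2 : ∀ b : ℝ, 0 < b → deriv (deriv (pwH n)) =ᶠ[nhds b] pwH2 n := by
    intro b hb
    filter_upwards [Ioi_mem_nhds hb] with x hx
    rw [(E1 x hx).deriv_eq]
    exact (pwH_d2 n hx).deriv
  refine ⟨?_, ?_, ?_, ?_⟩
  · simp only [pwH, Real.one_rpow, Real.log_one]; ring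
  · rw [(pwH_d1 n one_pos).deriv]
    simp only [pwH1, Real.one_rpow, Real.log_one, inv_one]; ring
  · rw [(E1 1 one_pos).deriv_eq, (pwH_d2 n one_pos).deriv]
    simp only [pwH2, Real.one_rpow, Real.log_one, inv_one, one_pow]; ring
  · rw [(E2 1 one_pos).deriv_eq, (pwH_d3 n one_pos).deriv]
    have h : pwH3 n 1 = -3 * (n - 2) ^ 2 := by
      simp only [pwH3, Real.one_rpow, Real.log_one, inv_one, one_pow]; ring
    rw [h]
    nlinarith [sq_nonneg (n - 2)]
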